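/- Let r_1,…,r_N ≥ 0, a > 0, ϱ > 0. Define s̄_1 = Σ_{i=1}^N i^a r_i and s̄_2 = Σ_{i=1}^N i^{a+ϱ} r_i. If ϱ ≥ 1, then Σ_{i=1}^N r_i ≥ s̄_1^{(a+ϱ)/ϱ} / s̄_2^{a/ϱ} (with the convention 0/0 = 0). -/

import Mathlib

open Finset Real

theorem frolov_cor1 (N : ℕ) (r : ℕ → ℝ) (a ϱ : ℝ)
    (hr : ∀ i ∈ Finset.Icc 1 N, 0 ≤ r i)
    (ha : 0 < a) (hϱ : 1 ≤ ϱ) :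
    ∑ i ∈ Finset.Icc 1 N, r i
      ≥ (∑ i ∈ Finset.Icc 1 N, (i : ℝ) ^ a * r i) ^ ((a + ϱ) / ϱ)
        / (∑ i ∈ Finset.Icc 1 N, (i : ℝ) ^ (a + ϱ) * r i) ^ (a / ϱ) := by
  have hϱ0 : 0 < ϱ := lt_of_lt_of_le one_pos hϱ
  have haϱ : 0 < a + ϱ := by linarith
  set S0 := ∑ i ∈ Finset.Icc 1 N, r i with hS0
  set S1 := ∑ i ∈ Finset.Icc 1 N, (i : ℝ) ^ a * r i with hS1
  set S2 := ∑ i ∈ Finset.Icc 1 N, (i : ℝ) ^ (a + ϱ) * r i with hS2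
  have hS0nn : 0 ≤ S0 := Finset.sum_nonneg hr
  have hS1nn : 0 ≤ S1 := Finset.sum_nonneg fun i hi =>
    mul_nonneg (Real.rpow_nonneg (Nat.cast_nonneg i) a) (hr i hi)
  have hS2nn : 0 ≤ S2 := Finset.sum_nonneg fun i hi =>
    mul_nonneg (Real.rpow_nonneg (Nat.cast_nonneg i) _) (hr i hi)
  rcases eq_or_lt_of_le hS2nn with h2 | h2
  · -- S2 = 0 : all r i = 0, hence S1 = 0
    have hterm := (Finset.sum_eq_zero_iff_of_nonneg fun i hi =>
        mul_nonneg (Real.rpow_nonneg (Nat.cast_nonneg i) (a + ϱ)) (hr i hi)).mp h2.symm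
    have hr0 : ∀ i ∈ Finset.Icc 1 N, r i = 0 := by
      intro i hi
      have hipos : (0 : ℝ) < (i : ℝ) ^ (a + ϱ) := by
        apply Real.rpow_pos_of_pos
        have : 1 ≤ i := (Finset.mem_Icc.mp hi).1
        exact_mod_cast this
      exact (mul_eq_zero.mp (hterm i hi)).resolve_left (ne_of_gt hipos)
    have h1 : S1 = 0 := Finset.sum_eq_zero fun i hi => by rw [hr0 i hi, mul_zero]
    rw [h1, ← h2, Real.zero_rpow (by positivity : (a + ϱ) / ϱ ≠ 0), zero_div]
    exact hS0nn
  · -- S2 > 0 : use Hölder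
    set w : ℕ → ℝ := fun i => if i ∈ Finset.Icc 1 N then r i else 0 with hw
    have hwnn : ∀ i, 0 ≤ w i := fun i => by
      simp only [hw]; split
      · exact hr i ‹_›
      · exact le_refl 0
    have hp : 1 ≤ (a + ϱ) / a := by rw [le_div_iff₀ ha]; linarith
    have hold := Real.inner_le_weight_mul_Lp_of_nonneg (Finset.Icc 1 N) hp w
      (fun i => (i : ℝ) ^ a) hwnn (fun i => Real.rpow_nonneg (Nat.cast_nonneg i) a)
    have e1 : ∑ i ∈ Finset.Icc 1 N, w i * (i : ℝ) ^ a = S1 :=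
      Finset.sum_congr rfl fun i hi => by simp only [hw, if_pos hi]; ring
    have e0 : ∑ i ∈ Finset.Icc 1 N, w i = S0 :=
      Finset.sum_congr rfl fun i hi => by simp only [hw, if_pos hi]
    have e2 : ∑ i ∈ Finset.Icc 1 N, w i * ((i : ℝ) ^ a) ^ ((a + ϱ) / a) = S2 := by
      refine Finset.sum_congr rfl fun i hi => ?_
      rw [← Real.rpow_mul (Nat.cast_nonneg i),
        show a * ((a + ϱ) / a) = a + ϱ by field_simp]
      simp only [hw, if_pos hi]; ring
    rw [e1, e0, e2] at hold
    have hexp1 : 1 - ((a + ϱ) / a)⁻¹ = ϱ / (a + ϱ) := by rw [inv_div]; field_simp; ring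
    have hexp2 : ((a + ϱ) / a)⁻¹ = a / (a + ϱ) := by rw [inv_div]
    rw [hexp1, hexp2] at hold
    rw [ge_iff_le, div_le_iff₀ (Real.rpow_pos_of_pos h2 _)]
    calc S1 ^ ((a + ϱ) / ϱ)
        ≤ (S0 ^ (ϱ / (a + ϱ)) * S2 ^ (a / (a + ϱ))) ^ ((a + ϱ) / ϱ) :=
          Real.rpow_le_rpow hS1nn hold (by positivity)
      _ = S0 * S2 ^ (a / ϱ) := by
          rw [Real.mul_rpow (Real.rpow_nonneg hS0nn _) (Real.rpow_nonneg hS2nn _),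
            ← Real.rpow_mul hS0nn, ← Real.rpow_mul hS2nn,
            show ϱ / (a + ϱ) * ((a + ϱ) / ϱ) = 1 by field_simp,
            show a / (a + ϱ) * ((a + ϱ) / ϱ) = a / ϱ by field_simp,
            Real.rpow_one]
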